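/- (Jensen's identity) For all complex numbers x, y, z and every natural number n, the sum over k from 0 to n of C(x+kz, k)·C(y−kz, n−k) equals the sum over k from 0 to n of C(x+y−k, n−k)·z^k. -/

import Mathlib

open Finset Polynomial


/-- The generalized binomial coefficient `C(x, k) = x(x-1)⋯(x-k+1)/k!` for `x : ℂ`. -/
noncomputable def genBinom (x : ℂ) (k : ℕ) : ℂ := (∏ i ∈ Finset.range k, (x - i)) / (Nat.factorial k)

lemma genBinom_zero (x : ℂ) : genBinom x 0 = 1 := by simp [genBinom]

lemma genBinom_pascal (x : ℂ) (k : ℕ) :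
    genBinom x (k+1) = genBinom (x-1) (k+1) + genBinom (x-1) k := by
  have hfac : ((k+1) * (k.factorial:ℂ)) ≠ 0 := by
    have : ((k:ℂ)+1) ≠ 0 := by exact Nat.cast_add_one_ne_zero k
    exact mul_ne_zero this (by exact_mod_cast (Nat.factorial_pos k).ne')
  have hfac' : ((k).factorial : ℂ) ≠ 0 := by exact_mod_cast (Nat.factorial_pos k).ne'
  have h1 : ∏ i ∈ range (k+1), (x - i) = x * ∏ i ∈ range k, (x - 1 - i) := by
    rw [Finset.prod_range_succ']
    simp only [Nat.cast_zero, sub_zero, Nat.cast_add, Nat.cast_one]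
    rw [mul_comm]
    congr 1
    apply Finset.prod_congr rfl
    intro i _
    ring
  have h2 : ∏ i ∈ range (k+1), (x - 1 - i) = (∏ i ∈ range k, (x - 1 - i)) * (x - 1 - k) := by
    rw [Finset.prod_range_succ]
  have hfs : ((k+1).factorial : ℂ) = (k+1) * (k.factorial : ℂ) := by
    rw [Nat.factorial_succ]; push_cast; ring
  rw [genBinom, genBinom, genBinom, h1, h2, hfs]
  generalize (∏ i ∈ range k, (x - 1 - (i:ℂ))) = P
  field_simp
  ring

lemma exists_poly_genBinom (a c : ℂ) (m : ℕ) :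
    ∃ p : Polynomial ℂ, ∀ t : ℂ, a * genBinom (t + c) m = p.eval t := by
  refine ⟨C (a / m.factorial) * ∏ i ∈ range m, (X + C c - C (i:ℂ)), fun t => ?_⟩
  rw [eval_mul, eval_C, eval_prod]
  simp only [eval_sub, eval_add, eval_X, eval_C]
  rw [genBinom]
  ring

lemma exists_poly_sum (M : ℕ) (F : ℕ → ℂ → ℂ)
    (h : ∀ k ∈ range M, ∃ p : Polynomial ℂ, ∀ t, F k t = p.eval t) :
    ∃ p : Polynomial ℂ, ∀ t, ∑ k ∈ range M, F k t = p.eval t := by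
  classical
  choose! p hp using h
  refine ⟨∑ k ∈ range M, p k, fun t => ?_⟩
  rw [eval_finset_sum]
  exact Finset.sum_congr rfl fun k hk => hp k hk t

lemma periodic_poly_const (f : ℂ → ℂ) (p : Polynomial ℂ) (hp : ∀ t, f t = p.eval t)
    (hper : ∀ t, f t = f (t - 1)) : ∀ t, f t = f 0 := by
  have key : ∀ m : ℕ, p.eval (-(m:ℂ)) = p.eval 0 := by
    intro m
    induction m with
    | zero => simp
    | succ m ih =>
      rw [← ih, ← hp, ← hp]
      have := hper (-(m:ℂ))
      rw [this]
      congr 1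
      push_cast; ring
  have hinf : Set.Infinite { x : ℂ | p.eval x = (C (p.eval 0)).eval x } := by
    apply Set.infinite_of_injective_forall_mem (f := fun m : ℕ => -(m:ℂ))
    case hi =>
      intro a b hab
      have : (a:ℂ) = b := by simpa using hab
      exact_mod_cast this
    case hf =>
      intro m
      simp only [Set.mem_setOf_eq, eval_C]
      exact key m
  have := Polynomial.eq_of_infinite_eval_eq _ _ hinf
  intro t
  rw [hp, hp, this, eval_C, eval_C]


lemma alt_sum_shift (n : ℕ) (g : ℕ → ℂ) :
    ∑ k ∈ range (n+2), (-1)^k * ((n+1).choose k : ℂ) * g k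
    = -∑ k ∈ range (n+1), (-1)^k * (n.choose k : ℂ) * (g (k+1) - g k) := by
  have hT : ∑ k ∈ range (n+1), -((-1)^k * ((n.choose (k+1)) : ℂ) * g (k+1))
      = ∑ k ∈ range (n+1), (-1)^k * (n.choose k : ℂ) * g k - g 0 := by
    have h1 : ∀ k, -((-1:ℂ)^k * ((n.choose (k+1)) : ℂ) * g (k+1))
        = (-1)^(k+1) * ((n.choose (k+1)) : ℂ) * g (k+1) := by
      intro k; rw [pow_succ]; ring
    calc ∑ k ∈ range (n+1), -((-1:ℂ)^k * ((n.choose (k+1)) : ℂ) * g (k+1))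
        = ∑ k ∈ range (n+1), (-1:ℂ)^(k+1) * ((n.choose (k+1)) : ℂ) * g (k+1) := by
          exact Finset.sum_congr rfl fun k _ => h1 k
      _ = ∑ k ∈ range (n+2), (-1:ℂ)^k * ((n.choose k) : ℂ) * g k - (-1:ℂ)^0 * ((n.choose 0):ℂ) * g 0 := by
          rw [Finset.sum_range_succ' (fun k => (-1:ℂ)^k * ((n.choose k) : ℂ) * g k) (n+1)]
          ring
      _ = ∑ k ∈ range (n+1), (-1:ℂ)^k * ((n.choose k) : ℂ) * g k - g 0 := by
          rw [Finset.sum_range_succ]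
          simp [Nat.choose_succ_self]
  rw [Finset.sum_range_succ' (fun k => (-1:ℂ)^k * (((n+1).choose k) : ℂ) * g k) (n+1)]
  have h2 : ∀ k, (-1:ℂ)^(k+1) * (((n+1).choose (k+1)) : ℂ) * g (k+1)
      = -((-1)^k * ((n.choose k) : ℂ) * g (k+1)) + -((-1)^k * ((n.choose (k+1)) : ℂ) * g (k+1)) := by
    intro k
    rw [Nat.choose_succ_succ n k, pow_succ]
    push_cast
    ring
  rw [Finset.sum_congr rfl (fun k _ => h2 k), Finset.sum_add_distrib, hT]
  have h3 : ∀ k, (-1:ℂ)^k * (n.choose k : ℂ) * (g (k+1) - g k)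
      = (-1:ℂ)^k*(n.choose k:ℂ)*g (k+1) - (-1:ℂ)^k*(n.choose k:ℂ)*g k := fun k => by ring
  rw [Finset.sum_congr rfl (fun k _ => h3 k), Finset.sum_sub_distrib, Finset.sum_neg_distrib]
  simp only [Nat.choose_zero_right, Nat.cast_one, mul_one, one_mul]
  ring

lemma finite_diff : ∀ (n : ℕ) (p : Polynomial ℂ), p.natDegree ≤ n →
    ∑ k ∈ range (n+1), (-1)^k * (n.choose k : ℂ) * p.eval (k:ℂ)
      = (-1)^n * (n.factorial : ℂ) * p.coeff n := by
  intro n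
  induction n with
  | zero =>
    intro p hp
    simp [Polynomial.coeff_zero_eq_eval_zero]
  | succ n ih =>
    intro p hp
    set q : Polynomial ℂ := ∑ i ∈ range (n+2), C (p.coeff i) * ((X+1)^i - X^i) with hq
    have hplt : p.natDegree < n + 2 := lt_of_le_of_lt hp (by omega)
    have heval : ∀ t : ℂ, q.eval t = p.eval (t+1) - p.eval t := by
      intro t
      rw [hq, eval_finset_sum]
      simp only [eval_mul, eval_C, eval_sub, eval_pow, eval_add, eval_X, eval_one]
      rw [Polynomial.eval_eq_sum_range' hplt (t+1), Polynomial.eval_eq_sum_range' hplt t]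
      rw [← Finset.sum_sub_distrib]
      exact Finset.sum_congr rfl fun i _ => by ring
    have hcoeff : ∀ m : ℕ, q.coeff m
        = (∑ i ∈ range (n+2), p.coeff i * (i.choose m : ℂ)) - p.coeff m := by
      intro m
      rw [hq, finset_sum_coeff]
      simp only [coeff_C_mul, coeff_sub, coeff_X_add_one_pow, coeff_X_pow]
      rw [Finset.sum_congr rfl (fun x (_ : x ∈ range (n+2)) =>
        show p.coeff x * ((x.choose m : ℂ) - if m = x then 1 else 0)
          = p.coeff x * (x.choose m : ℂ) - (if m = x then p.coeff x else 0) from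
          by split <;> ring), Finset.sum_sub_distrib]
      congr 1
      rw [Finset.sum_ite_eq]
      split
      · rfl
      · next h =>
        rw [Polynomial.coeff_eq_zero_of_natDegree_lt]
        simp only [Finset.mem_range, not_lt] at h
        omega
    have hsum_gt : ∀ m : ℕ, n < m →
        (∑ i ∈ range (n+2), p.coeff i * (i.choose m : ℂ)) = p.coeff m := by
      intro m hm
      rw [Finset.sum_congr rfl (fun x (hx : x ∈ range (n+2)) =>
        show p.coeff x * (x.choose m : ℂ) = if m = x then p.coeff x else 0 from by
          split
          · next h => subst h; simp
          · next h =>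
            rw [Nat.choose_eq_zero_of_lt (by simp only [Finset.mem_range] at hx; omega)]
            simp)]
      rw [Finset.sum_ite_eq]
      split
      · rfl
      · next h =>
        rw [Polynomial.coeff_eq_zero_of_natDegree_lt]
        simp only [Finset.mem_range, not_lt] at h
        omega
    have hdq : q.natDegree ≤ n := by
      rw [Polynomial.natDegree_le_iff_coeff_eq_zero]
      intro m hm
      rw [hcoeff m, hsum_gt m hm, sub_self]
    have hqn : q.coeff n = ((n:ℂ)+1) * p.coeff (n+1) := by
      rw [hcoeff n, Finset.sum_range_succ, Finset.sum_range_succ]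
      rw [Finset.sum_congr rfl (fun x (hx : x ∈ range n) =>
        show p.coeff x * (x.choose n : ℂ) = 0 from by
          rw [Nat.choose_eq_zero_of_lt (by simp only [Finset.mem_range] at hx; omega)]; simp)]
      simp only [Finset.sum_const_zero, zero_add, Nat.choose_self, Nat.cast_one, mul_one,
        Nat.choose_succ_self_right]
      push_cast
      ring
    rw [alt_sum_shift n (fun k => p.eval (k:ℂ))]
    have : ∀ k ∈ range (n+1), (-1:ℂ)^k * (n.choose k : ℂ) * (p.eval ((k+1 : ℕ):ℂ) - p.eval (k:ℂ))
        = (-1)^k * (n.choose k : ℂ) * q.eval (k:ℂ) := by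
      intro k _
      rw [heval (k:ℂ)]
      push_cast
      ring
    rw [Finset.sum_congr rfl this, ih q hdq, hqn]
    rw [Nat.factorial_succ]
    push_cast
    ring

lemma prodlin (a : ℂ) (b : ℕ → ℂ) : ∀ M : ℕ,
    (∏ j ∈ range M, (C a * X + C (b j))).natDegree ≤ M ∧
    (∏ j ∈ range M, (C a * X + C (b j))).coeff M = a^M := by
  intro M
  induction M with
  | zero => simp
  | succ M ih =>
    rw [Finset.prod_range_succ]
    set R := ∏ j ∈ range M, (C a * X + C (b j)) with hR
    have hL : (C a * X + C (b M)).natDegree ≤ 1 :=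
      le_trans (natDegree_add_le _ _) (by
        simp only [natDegree_C, max_le_iff]
        exact ⟨le_trans (natDegree_C_mul_le a X) (le_of_eq natDegree_X), Nat.zero_le 1⟩)
    constructor
    · exact le_trans (natDegree_mul_le) (add_le_add ih.1 hL)
    · have hexp : R * (C a * X + C (b M)) = C a * (R * X) + C (b M) * R := by ring
      rw [hexp, coeff_add, coeff_C_mul, coeff_C_mul, coeff_mul_X, ih.2,
        Polynomial.coeff_eq_zero_of_natDegree_lt (lt_of_le_of_lt ih.1 (by omega))]
      ring

lemma prod_split (z : ℂ) (k m : ℕ) :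
    (∏ i ∈ range k, ((k:ℂ)*z - i)) * ∏ i ∈ range (m+1), ((k:ℂ)*z + i)
    = (k:ℂ)*z * ∏ j ∈ range (k+m), ((k:ℂ)*z - k + 1 + j) := by
  have hsplit := Finset.prod_range_add (fun j : ℕ => (k:ℂ)*z - k + 1 + j) k m
  have h1 : ∏ j ∈ range k, ((k:ℂ)*z - k + 1 + j) = ∏ i ∈ range k, ((k:ℂ)*z - i) := by
    rw [← Finset.prod_range_reflect]
    apply Finset.prod_congr rfl
    intro j hj
    simp only [Finset.mem_range] at hj
    have e : (k - 1 - j : ℕ) = k - (j+1) := by omega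
    have : ((k - 1 - j : ℕ) : ℂ) = (k:ℂ) - 1 - j := by
      rw [e, Nat.cast_sub (by omega : j+1 ≤ k)]
      push_cast
      ring
    rw [this]
    ring
  have h2 : ∏ i ∈ range (m+1), ((k:ℂ)*z + i) = (k:ℂ)*z * ∏ i ∈ range m, ((k:ℂ)*z + 1 + i) := by
    rw [Finset.prod_range_succ' (fun i : ℕ => (k:ℂ)*z + i) m]
    push_cast
    rw [add_zero, mul_comm]
    refine congrArg ((k:ℂ)*z * ·) ?_
    apply Finset.prod_congr rfl
    intro j _
    ring
  have h3 : ∏ j ∈ range m, ((k:ℂ)*z - k + 1 + ((k + j : ℕ):ℂ)) = ∏ i ∈ range m, ((k:ℂ)*z + 1 + i) := by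
    apply Finset.prod_congr rfl
    intro j _
    push_cast
    ring
  rw [hsplit, h1, h2, h3]
  ring

noncomputable def fpoly (z : ℂ) (n : ℕ) : Polynomial ℂ :=
  C z * (X * ∏ j ∈ range n, (C (z-1) * X + C ((j:ℂ)+1)))

lemma fpoly_natDegree_le (z : ℂ) (n : ℕ) : (fpoly z n).natDegree ≤ n + 1 := by
  refine le_trans (natDegree_C_mul_le _ _) (le_trans natDegree_mul_le ?_)
  rw [natDegree_X]
  have := (prodlin (z-1) (fun j => (j:ℂ)+1) n).1
  omega

lemma fpoly_coeff (z : ℂ) (n : ℕ) : (fpoly z n).coeff (n+1) = z * (z-1)^n := by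
  rw [fpoly, coeff_C_mul, coeff_X_mul, (prodlin (z-1) (fun j => (j:ℂ)+1) n).2]

lemma fpoly_eval (z : ℂ) (n : ℕ) (t : ℂ) :
    (fpoly z n).eval t = z * t * ∏ j ∈ range n, ((z-1)*t + (j+1)) := by
  rw [fpoly, eval_mul, eval_C, eval_mul, eval_X, eval_prod]
  simp only [eval_add, eval_mul, eval_C, eval_X]
  ring

lemma genBinom_neg (w : ℂ) (m : ℕ) :
    genBinom (-w) m = (-1)^m * (∏ i ∈ range m, (w + i)) / (m.factorial : ℂ) := by
  rw [genBinom]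
  congr 1
  calc ∏ i ∈ range m, (-w - (i:ℂ)) = ∏ i ∈ range m, (-1) * (w + i) :=
        Finset.prod_congr rfl (fun i _ => by ring)
    _ = (-1)^m * ∏ i ∈ range m, (w + (i:ℂ)) := by
        rw [Finset.prod_mul_distrib, Finset.prod_const, Finset.card_range]

lemma termwise (z : ℂ) (n k : ℕ) (hk : k ∈ range (n+2)) :
    genBinom ((k:ℂ)*z) k * genBinom (-((k:ℂ)*z)) (n+1-k)
    = (-1:ℂ)^(n+1) * (-1)^k * (((n+1).choose k : ℕ) : ℂ) * (fpoly z n).eval (k:ℂ)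
        / (((n+1).factorial : ℕ) : ℂ) := by
  simp only [Finset.mem_range] at hk
  have hfk : ((k.factorial : ℕ) : ℂ) ≠ 0 := by exact_mod_cast (Nat.factorial_pos k).ne'
  have hfN : (((n+1).factorial : ℕ) : ℂ) ≠ 0 := by exact_mod_cast (Nat.factorial_pos (n+1)).ne'
  rcases Nat.lt_or_ge k (n+1) with hlt | hge
  · obtain ⟨m, hm⟩ : ∃ m, n = k + m := ⟨n - k, by omega⟩
    have hsub : n + 1 - k = m + 1 := by omega
    have hfm : (((m+1).factorial : ℕ) : ℂ) ≠ 0 := by exact_mod_cast (Nat.factorial_pos (m+1)).ne'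
    rw [hsub, genBinom, genBinom_neg, fpoly_eval]
    have hprod : ∏ j ∈ range n, ((z-1)*(k:ℂ) + ((j:ℂ)+1))
        = ∏ j ∈ range (k+m), ((k:ℂ)*z - k + 1 + j) := by
      rw [hm]
      exact Finset.prod_congr rfl (fun j _ => by ring)
    have hkey : z * (k:ℂ) * ∏ j ∈ range n, ((z-1)*(k:ℂ) + ((j:ℂ)+1))
        = (∏ i ∈ range k, ((k:ℂ)*z - i)) * ∏ i ∈ range (m+1), ((k:ℂ)*z + i) := by
      rw [hprod, prod_split z k m]
      ring
    have hchoose : (((n+1).choose k : ℕ) : ℂ) * (k.factorial : ℂ) * ((m+1).factorial : ℂ)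
        = (((n+1).factorial : ℕ) : ℂ) := by
      have h2 := Nat.add_choose_mul_factorial_mul_factorial k (m+1)
      have hn1 : k + (m+1) = n + 1 := by omega
      rw [hn1] at h2
      have h3 : (n+1).choose (m+1) = (n+1).choose k := by
        rw [← Nat.choose_symm (show m+1 ≤ n+1 by omega)]
        congr 1
        omega
      rw [h3] at h2
      exact_mod_cast congrArg (Nat.cast : ℕ → ℂ) h2
    have hsign : (-1:ℂ)^(n+1) * (-1:ℂ)^k = (-1:ℂ)^(m+1) := by
      rw [← pow_add, show n+1+k = m+1+2*k from by omega, pow_add, pow_mul]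
      norm_num
    have hC : (((n+1).choose k : ℕ) : ℂ) ≠ 0 := by
      exact_mod_cast (Nat.choose_pos (by omega : k ≤ n+1)).ne'
    rw [hkey, ← hsign, ← hchoose]
    field_simp
  · have hk1 : k = n + 1 := by omega
    subst hk1
    have hsub : n + 1 - (n+1) = 0 := by omega
    rw [hsub, genBinom, genBinom]
    simp only [Finset.range_zero, Finset.prod_empty, Nat.factorial_zero, Nat.cast_one, div_one,
      Nat.choose_self, mul_one]
    have hsign : (-1:ℂ)^(n+1) * (-1:ℂ)^(n+1) = 1 := by
      rw [← pow_add, ← two_mul, pow_mul]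
      norm_num
    rw [fpoly_eval]
    have hrefl : ∏ i ∈ range (n+1), ((((n+1):ℕ):ℂ)*z - (i:ℂ))
        = (∏ j ∈ range n, ((((n+1):ℕ):ℂ)*z - n + j)) * ((((n+1):ℕ):ℂ)*z) := by
      calc ∏ i ∈ range (n+1), ((((n+1):ℕ):ℂ)*z - (i:ℂ))
          = ∏ j ∈ range (n+1), ((((n+1):ℕ):ℂ)*z - n + j) := by
            rw [← Finset.prod_range_reflect (fun j : ℕ => (((n+1):ℕ):ℂ)*z - n + (j:ℂ)) (n+1)]
            apply Finset.prod_congr rfl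
            intro j hj
            simp only [Finset.mem_range] at hj
            have e : (n + 1 - 1 - j : ℕ) = n - j := by omega
            simp only [e, Nat.cast_sub (by omega : j ≤ n)]
            ring
        _ = (∏ j ∈ range n, ((((n+1):ℕ):ℂ)*z - n + j)) * ((((n+1):ℕ):ℂ)*z) := by
            rw [Finset.prod_range_succ]
            norm_num
    have hprod2 : ∏ j ∈ range n, ((z-1)*(((n+1):ℕ):ℂ) + ((j:ℂ)+1))
        = ∏ j ∈ range n, ((((n+1):ℕ):ℂ)*z - n + j) := by
      apply Finset.prod_congr rfl
      intro j _
      push_cast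
      ring
    rw [hrefl, hprod2, hsign]
    push_cast
    ring

lemma baseP (z : ℂ) (n : ℕ) :
    ∑ k ∈ range (n+2), genBinom ((k:ℂ)*z) k * genBinom (-((k:ℂ)*z)) (n+1-k)
      = z * (z-1)^n := by
  have hfN : (((n+1).factorial : ℕ) : ℂ) ≠ 0 := by exact_mod_cast (Nat.factorial_pos (n+1)).ne'
  rw [Finset.sum_congr rfl (termwise z n)]
  have hpull : ∀ k ∈ range (n+2),
      (-1:ℂ)^(n+1) * (-1)^k * (((n+1).choose k : ℕ) : ℂ) * (fpoly z n).eval (k:ℂ)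
        / (((n+1).factorial : ℕ) : ℂ)
      = ((-1:ℂ)^(n+1) / (((n+1).factorial : ℕ) : ℂ))
          * ((-1)^k * (((n+1).choose k : ℕ) : ℂ) * (fpoly z n).eval (k:ℂ)) := by
    intro k _
    ring
  rw [Finset.sum_congr rfl hpull, ← Finset.mul_sum,
    finite_diff (n+1) (fpoly z n) (fpoly_natDegree_le z n), fpoly_coeff]
  have hsign : (-1:ℂ)^(n+1) * (-1:ℂ)^(n+1) = 1 := by
    rw [← pow_add, ← two_mul, pow_mul]
    norm_num
  field_simp
  have hs2 : (-1:ℂ)^(n*2) = 1 := by rw [mul_comm, pow_mul]; norm_num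
  linear_combination z * (z-1)^n * hs2

lemma genBinom_succ (x : ℂ) (m : ℕ) :
    genBinom x (m+1) = genBinom x m * (x - m) / (m+1) := by
  have hfm : ((m.factorial : ℕ) : ℂ) ≠ 0 := by exact_mod_cast (Nat.factorial_pos m).ne'
  have hm1 : ((m:ℂ)+1) ≠ 0 := Nat.cast_add_one_ne_zero m
  rw [genBinom, genBinom, Finset.prod_range_succ, Nat.factorial_succ]
  push_cast
  rw [div_eq_div_iff (mul_ne_zero hm1 hfm) (by exact hm1)]
  field_simp

lemma genBinom_neg_nat (j : ℕ) : ∀ m : ℕ,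
    genBinom (-((j:ℂ)+1)) m = (-1)^m * (((j+m).choose m : ℕ) : ℂ) := by
  intro m
  induction m with
  | zero => simp [genBinom]
  | succ m ih =>
    rw [genBinom_succ, ih]
    have hrec := Nat.add_one_mul_choose_eq (j+m) m
    have hm1 : ((m:ℂ)+1) ≠ 0 := Nat.cast_add_one_ne_zero m
    have hcast : ((j:ℂ) + m + 1) * (((j+m).choose m : ℕ) : ℂ)
        = (((j+m+1).choose (m+1) : ℕ) : ℂ) * ((m:ℂ)+1) := by
      exact_mod_cast congrArg (Nat.cast : ℕ → ℂ) hrec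
    have hidx : j + (m+1) = j + m + 1 := by omega
    rw [hidx, div_eq_iff hm1]
    linear_combination ((-1:ℂ)^(m+1)) * hcast

lemma baseQ (z : ℂ) (n : ℕ) :
    ∑ k ∈ range (n+2), genBinom (-(k:ℂ)) (n+1-k) * z^k = z * (z-1)^n := by
  rw [Finset.sum_range_succ' (fun k => genBinom (-(k:ℂ)) (n+1-k) * z^k) (n+1)]
  have h0 : genBinom (-((0:ℕ):ℂ)) (n+1-0) * z^0 = 0 := by
    have hz : ∏ i ∈ range (n+1), (-((0:ℕ):ℂ) - i) = 0 :=
      Finset.prod_eq_zero (Finset.mem_range.mpr (Nat.succ_pos n)) (by simp)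
    simp only [Nat.sub_zero]
    rw [genBinom, hz]
    simp
  rw [h0, add_zero]
  have hterm : ∀ j ∈ range (n+1),
      genBinom (-((j+1:ℕ):ℂ)) (n+1-(j+1)) * z^(j+1)
      = z^(j+1) * (-1)^(n-j) * ((n.choose j : ℕ) : ℂ) := by
    intro j hj
    simp only [Finset.mem_range] at hj
    have hsub : n + 1 - (j+1) = n - j := by omega
    have hcast : ((j+1:ℕ):ℂ) = (j:ℂ) + 1 := by push_cast; ring
    rw [hsub, hcast, genBinom_neg_nat j (n-j)]
    have hjn : j + (n-j) = n := by omega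
    rw [hjn, Nat.choose_symm (by omega : j ≤ n)]
    ring
  rw [Finset.sum_congr rfl hterm]
  have hbin : (z - 1)^n = ∑ j ∈ range (n+1), z^j * (-1:ℂ)^(n-j) * ((n.choose j : ℕ) : ℂ) := by
    rw [sub_eq_add_neg, add_pow]
  rw [hbin, Finset.mul_sum]
  exact Finset.sum_congr rfl (fun j _ => by rw [pow_succ]; ring)

lemma genBinom_congr {a b : ℂ} (m : ℕ) (h : a = b) : genBinom a m = genBinom b m := by rw [h]

noncomputable def Psum (n : ℕ) (x y z : ℂ) : ℂ :=
  ∑ k ∈ Finset.range (n + 1), genBinom (x + k * z) k * genBinom (y - k * z) (n - k)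

noncomputable def Qsum (n : ℕ) (x y z : ℂ) : ℂ :=
  ∑ k ∈ Finset.range (n + 1), genBinom (x + y - k) (n - k) * z ^ k

lemma Psum_rec_y (n : ℕ) (x y z : ℂ) :
    Psum (n+1) x y z = Psum (n+1) x (y-1) z + Psum n x (y-1) z := by
  unfold Psum
  rw [Finset.sum_range_succ, Finset.sum_range_succ
    (fun k => genBinom (x + k * z) k * genBinom ((y-1) - k * z) (n + 1 - k)) (n+1)]
  have hlast : genBinom (y - (↑(n+1)) * z) (n+1-(n+1)) = genBinom ((y-1) - (↑(n+1)) * z) (n+1-(n+1)) := by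
    simp [genBinom_zero]
  have hsplit : ∀ k ∈ range (n+1),
      genBinom (x + k * z) k * genBinom (y - k * z) (n + 1 - k)
      = genBinom (x + k * z) k * genBinom ((y-1) - k * z) (n + 1 - k)
        + genBinom (x + k * z) k * genBinom ((y-1) - k * z) (n - k) := by
    intro k hk
    simp only [Finset.mem_range] at hk
    have h1 : n + 1 - k = (n - k) + 1 := by omega
    rw [h1, genBinom_pascal (y - k*z) (n-k),
      genBinom_congr ((n-k)+1) (show y - ↑k*z - 1 = y - 1 - ↑k*z by ring),
      genBinom_congr (n-k) (show y - ↑k*z - 1 = y - 1 - ↑k*z by ring)]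
    ring
  rw [Finset.sum_congr rfl hsplit, Finset.sum_add_distrib, hlast]
  ring

lemma Qsum_rec_y (n : ℕ) (x y z : ℂ) :
    Qsum (n+1) x y z = Qsum (n+1) x (y-1) z + Qsum n x (y-1) z := by
  unfold Qsum
  rw [Finset.sum_range_succ, Finset.sum_range_succ
    (fun k => genBinom (x + (y-1) - k) (n + 1 - k) * z ^ k) (n+1)]
  have hlast : genBinom (x + y - (↑(n+1))) (n+1-(n+1)) = genBinom (x + (y-1) - (↑(n+1))) (n+1-(n+1)) := by
    simp [genBinom_zero]
  have hsplit : ∀ k ∈ range (n+1),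
      genBinom (x + y - k) (n + 1 - k) * z ^ k
      = genBinom (x + (y-1) - k) (n + 1 - k) * z ^ k
        + genBinom (x + (y-1) - k) (n - k) * z ^ k := by
    intro k hk
    simp only [Finset.mem_range] at hk
    have h1 : n + 1 - k = (n - k) + 1 := by omega
    rw [h1, genBinom_pascal (x + y - k) (n-k),
      genBinom_congr ((n-k)+1) (show x + y - ↑k - 1 = x + (y-1) - ↑k by ring),
      genBinom_congr (n-k) (show x + y - ↑k - 1 = x + (y-1) - ↑k by ring)]
    ring
  rw [Finset.sum_congr rfl hsplit, Finset.sum_add_distrib, hlast]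
  ring

lemma Psum_rec_x (n : ℕ) (x y z : ℂ) :
    Psum (n+1) x y z = Psum (n+1) (x-1) y z + Psum n (x-1+z) (y-z) z := by
  unfold Psum
  rw [Finset.sum_range_succ', Finset.sum_range_succ'
    (fun k => genBinom ((x-1) + k * z) k * genBinom (y - k * z) (n + 1 - k)) (n+1)]
  have hfirst : genBinom (x + (↑(0:ℕ)) * z) 0 * genBinom (y - (↑(0:ℕ)) * z) (n+1-0)
      = genBinom ((x-1) + (↑(0:ℕ)) * z) 0 * genBinom (y - (↑(0:ℕ)) * z) (n+1-0) := by
    simp [genBinom_zero]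
  have hsplit : ∀ k ∈ range (n+1),
      genBinom (x + (↑(k+1)) * z) (k+1) * genBinom (y - (↑(k+1)) * z) (n + 1 - (k+1))
      = genBinom ((x-1) + (↑(k+1)) * z) (k+1) * genBinom (y - (↑(k+1)) * z) (n + 1 - (k+1))
        + genBinom ((x-1+z) + k * z) k * genBinom ((y-z) - k * z) (n - k) := by
    intro k hk
    simp only [Finset.mem_range] at hk
    have h1 : n + 1 - (k+1) = n - k := by omega
    rw [h1, genBinom_pascal (x + (↑(k+1)) * z) k,
      genBinom_congr (k+1) (show x + (↑(k+1)) * z - 1 = (x-1) + (↑(k+1)) * z by ring),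
      genBinom_congr k (show x + (↑(k+1)) * z - 1 = (x-1+z) + ↑k * z by push_cast; ring),
      genBinom_congr (n-k) (show y - (↑(k+1)) * z = (y-z) - ↑k * z by push_cast; ring)]
    ring
  rw [Finset.sum_congr rfl hsplit, Finset.sum_add_distrib, hfirst]
  ring

lemma Qsum_congr {x y x' y' : ℂ} (n : ℕ) (z : ℂ) (h : x + y = x' + y') :
    Qsum n x y z = Qsum n x' y' z := by
  unfold Qsum
  exact Finset.sum_congr rfl fun k _ => by rw [genBinom_congr (n-k) (show x + y - ↑k = x' + y' - ↑k by rw [h])]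

lemma Qsum_rec_x (n : ℕ) (x y z : ℂ) :
    Qsum (n+1) x y z = Qsum (n+1) (x-1) y z + Qsum n (x-1+z) (y-z) z := by
  rw [Qsum_rec_y n x y z,
    Qsum_congr (n+1) z (show x + (y-1) = (x-1) + y by ring),
    Qsum_congr n z (show x + (y-1) = (x-1+z) + (y-z) by ring)]

lemma exists_poly_D_y (n : ℕ) (x z : ℂ) :
    ∃ p : Polynomial ℂ, ∀ y, Psum n x y z - Qsum n x y z = p.eval y := by
  obtain ⟨p1, hp1⟩ := exists_poly_sum (n+1)
    (fun k y => genBinom (x + k * z) k * genBinom (y - k * z) (n - k))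
    (fun k _ => by
      obtain ⟨p, hp⟩ := exists_poly_genBinom (genBinom (x + k * z) k) (-(k*z)) (n-k)
      exact ⟨p, fun t => by rw [← hp t]; exact congrArg _ (genBinom_congr _ (by ring))⟩)
  obtain ⟨p2, hp2⟩ := exists_poly_sum (n+1)
    (fun k y => genBinom (x + y - k) (n - k) * z ^ k)
    (fun k _ => by
      obtain ⟨p, hp⟩ := exists_poly_genBinom (z^k) (x - k) (n-k)
      exact ⟨p, fun t => by rw [← hp t, mul_comm]; exact congrArg (z^k * ·) (genBinom_congr _ (by ring))⟩)
  exact ⟨p1 - p2, fun y => by rw [eval_sub, ← hp1 y, ← hp2 y]; rfl⟩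

lemma exists_poly_D_x (n : ℕ) (y z : ℂ) :
    ∃ p : Polynomial ℂ, ∀ x, Psum n x y z - Qsum n x y z = p.eval x := by
  obtain ⟨p1, hp1⟩ := exists_poly_sum (n+1)
    (fun k x => genBinom (x + k * z) k * genBinom (y - k * z) (n - k))
    (fun k _ => by
      obtain ⟨p, hp⟩ := exists_poly_genBinom (genBinom (y - k * z) (n-k)) (k*z) k
      exact ⟨p, fun t => by rw [← hp t, mul_comm]⟩)
  obtain ⟨p2, hp2⟩ := exists_poly_sum (n+1)
    (fun k x => genBinom (x + y - k) (n - k) * z ^ k)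
    (fun k _ => by
      obtain ⟨p, hp⟩ := exists_poly_genBinom (z^k) (y - k) (n-k)
      exact ⟨p, fun t => by rw [← hp t, mul_comm]; exact congrArg (z^k * ·) (genBinom_congr _ (by ring))⟩)
  exact ⟨p1 - p2, fun x => by rw [eval_sub, ← hp1 x, ← hp2 x]; rfl⟩

lemma jensen_aux : ∀ (n : ℕ) (x y z : ℂ), Psum n x y z = Qsum n x y z := by
  intro n
  induction n with
  | zero =>
    intro x y z
    simp [Psum, Qsum, genBinom_zero]
  | succ n ih =>
    intro x y z
    set D : ℂ → ℂ → ℂ := fun x y => Psum (n+1) x y z - Qsum (n+1) x y z with hD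
    have per_y : ∀ x y, D x y = D x (y - 1) := by
      intro x y
      simp only [hD]
      rw [Psum_rec_y, Qsum_rec_y, ih x (y-1) z]
      ring
    have per_x : ∀ x y, D x y = D (x - 1) y := by
      intro x y
      simp only [hD]
      rw [Psum_rec_x, Qsum_rec_x, ih (x-1+z) (y-z) z]
      ring
    have hy : ∀ x y, D x y = D x 0 := by
      intro x y
      obtain ⟨p, hp⟩ := exists_poly_D_y (n+1) x z
      exact periodic_poly_const (D x) p (fun t => hp t) (fun t => per_y x t) y
    have hx : ∀ x, D x 0 = D 0 0 := by
      intro x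
      obtain ⟨p, hp⟩ := exists_poly_D_x (n+1) 0 z
      exact periodic_poly_const (fun x => D x 0) p (fun t => hp t) (fun t => per_x t 0) x
    have hbase : D 0 0 = 0 := by
      simp only [hD]
      have h1 : Psum (n+1) 0 0 z = z * (z-1)^n := by
        rw [Psum, ← baseP z n]
        refine Finset.sum_congr rfl fun k _ => ?_
        rw [genBinom_congr k (show (0:ℂ) + k*z = (k:ℂ)*z by ring),
          genBinom_congr (n+1-k) (show (0:ℂ) - k*z = -((k:ℂ)*z) by ring)]
      have h2 : Qsum (n+1) 0 0 z = z * (z-1)^n := by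
        rw [Qsum, ← baseQ z n]
        refine Finset.sum_congr rfl fun k _ => ?_
        rw [genBinom_congr (n+1-k) (show (0:ℂ) + 0 - k = -(k:ℂ) by ring)]
      rw [h1, h2, sub_self]
    have : D x y = 0 := by rw [hy x y, hx x, hbase]
    have := sub_eq_zero.mp this
    exact this

/-- Jensen's identity. -/
theorem jensen_identity (x y z : ℂ) (n : ℕ) :
    ∑ k ∈ Finset.range (n + 1), genBinom (x + k * z) k * genBinom (y - k * z) (n - k) =
      ∑ k ∈ Finset.range (n + 1), genBinom (x + y - k) (n - k) * z ^ k :=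
  jensen_aux n x y z
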